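/- Let n ≥ 1, let A_R be a symmetric invertible n × n integer matrix, let P be an n × n integer matrix with det P = ±1, let S = diag(d₁,…,dₙ) with positive integers dᵢ, set A_Λ := P·S·Pᵀ, and let ℓ ≥ 1 be an integer. Set D_ℓ := diag(ℓ/gcd(ℓ,d₁),…,ℓ/gcd(ℓ,dₙ)). Then, as subgroups of ℚⁿ, A_R·ℤⁿ ∩ ℓ·(A_Λ⁻¹·A_R)ᵀ·ℤⁿ = A_R·(Pᵀ)⁻¹·D_ℓ·P⁻¹·ℤⁿ, where A_Λ⁻¹ and the other inverses are taken over ℚ. -/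

import Mathlib

/-- The image lattice `M·ℤⁿ ⊆ ℚⁿ` of a rational matrix `M`. -/
def imageLat {n : ℕ} (M : Matrix (Fin n) (Fin n) ℚ) : Set (Fin n → ℚ) :=
  {x | ∃ v : Fin n → ℤ, x = M.mulVec (fun i => (v i : ℚ))}

open Matrix

lemma castVec_mulVec {n : ℕ} (U : Matrix (Fin n) (Fin n) ℤ) (v : Fin n → ℤ) :
    (U.map ((↑) : ℤ → ℚ)).mulVec (fun i => (v i : ℚ))
      = fun i => ((U.mulVec v) i : ℚ) := by
  funext i
  simp [Matrix.mulVec, dotProduct, Matrix.map_apply]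

lemma imageLat_mul_unimod {n : ℕ} (M : Matrix (Fin n) (Fin n) ℚ)
    (U V : Matrix (Fin n) (Fin n) ℤ) (hUV : U * V = 1) :
    imageLat (M * U.map ((↑) : ℤ → ℚ)) = imageLat M := by
  ext x
  constructor
  · rintro ⟨v, rfl⟩
    refine ⟨U.mulVec v, ?_⟩
    rw [← Matrix.mulVec_mulVec, castVec_mulVec]
  · rintro ⟨v, rfl⟩
    refine ⟨V.mulVec v, ?_⟩
    rw [← Matrix.mulVec_mulVec, castVec_mulVec, Matrix.mulVec_mulVec, hUV,
      Matrix.one_mulVec]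

lemma imageLat_mul_left {n : ℕ} (N B : Matrix (Fin n) (Fin n) ℚ) :
    imageLat (N * B) = (fun x => N.mulVec x) '' imageLat B := by
  ext x
  constructor
  · rintro ⟨v, rfl⟩
    exact ⟨B.mulVec (fun i => (v i : ℚ)), ⟨v, rfl⟩, by simp [Matrix.mulVec_mulVec]⟩
  · rintro ⟨y, ⟨v, rfl⟩, rfl⟩
    exact ⟨v, by simp [Matrix.mulVec_mulVec]⟩

lemma mem_imageLat_diagonal {n : ℕ} (c : Fin n → ℚ) (x : Fin n → ℚ) :
    x ∈ imageLat (Matrix.diagonal c) ↔ ∀ i, ∃ w : ℤ, x i = c i * w := by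
  constructor
  · rintro ⟨v, rfl⟩ i
    exact ⟨v i, by simp [Matrix.mulVec_diagonal]⟩
  · intro h
    choose w hw using h
    exact ⟨w, by funext i; simp [Matrix.mulVec_diagonal, hw i]⟩

lemma mem_imageLat_one {n : ℕ} (x : Fin n → ℚ) :
    x ∈ imageLat (1 : Matrix (Fin n) (Fin n) ℚ) ↔ ∀ i, ∃ u : ℤ, x i = u := by
  constructor
  · rintro ⟨v, rfl⟩ i
    exact ⟨v i, by simp [Matrix.one_mulVec]⟩
  · intro h
    choose u hu using h
    exact ⟨u, by funext i; simp [Matrix.one_mulVec, hu i]⟩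

lemma key_scalar (ℓ D : ℕ) (hℓ : 0 < ℓ) (hD : 0 < D) (x : ℚ) :
    ((∃ u : ℤ, x = u) ∧ (∃ v : ℤ, x = (ℓ : ℚ) / (D : ℚ) * v)) ↔
    ∃ w : ℤ, x = ((ℓ / Nat.gcd ℓ D : ℕ) : ℚ) * w := by
  set g := Nat.gcd ℓ D with hg
  have hgpos : 0 < g := Nat.gcd_pos_of_pos_left D hℓ
  have hgl : g ∣ ℓ := Nat.gcd_dvd_left ℓ D
  have hgd : g ∣ D := Nat.gcd_dvd_right ℓ D
  have hgQ : (g : ℚ) ≠ 0 := by exact_mod_cast hgpos.ne'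
  have hDQ : (D : ℚ) ≠ 0 := by exact_mod_cast hD.ne'
  have hcastl : ((ℓ / g : ℕ) : ℚ) = (ℓ : ℚ) / g := Nat.cast_div hgl hgQ
  have hcastd : ((D / g : ℕ) : ℚ) = (D : ℚ) / g := Nat.cast_div hgd hgQ
  constructor
  · rintro ⟨⟨u, rfl⟩, ⟨v, hv⟩⟩
    have hQ : (u : ℚ) * D = ℓ * v := by
      field_simp at hv
      linarith [hv]
    have hZ : u * (D : ℤ) = (ℓ : ℤ) * v := by exact_mod_cast hQ
    set a : ℕ := ℓ / g
    set b : ℕ := D / g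
    have hla : ℓ = g * a := (Nat.mul_div_cancel' hgl).symm
    have hdb : D = g * b := (Nat.mul_div_cancel' hgd).symm
    have hcop : Nat.Coprime a b := Nat.coprime_div_gcd_div_gcd hgpos
    have hZ2 : u * (b : ℤ) = (a : ℤ) * v := by
      have : u * ((g : ℤ) * b) = ((g : ℤ) * a) * v := by
        rw [← Nat.cast_mul, ← Nat.cast_mul, ← hla, ← hdb]; exact hZ
      have hgz : (g : ℤ) ≠ 0 := by exact_mod_cast hgpos.ne'
      apply mul_left_cancel₀ hgz
      ring_nf
      ring_nf at this
      linarith [this]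
    have hdvd : (a : ℤ) ∣ u := by
      have hcopZ : IsCoprime (a : ℤ) (b : ℤ) := by
        rw [Int.isCoprime_iff_gcd_eq_one]
        simpa using hcop
      exact hcopZ.dvd_of_dvd_mul_right ⟨v, hZ2⟩
    obtain ⟨w, hw⟩ := hdvd
    exact ⟨w, by rw [hw]; push_cast; ring⟩
  · rintro ⟨w, rfl⟩
    refine ⟨⟨((ℓ / g : ℕ) : ℤ) * w, by rw [Int.cast_mul, Int.cast_natCast]⟩,
      ⟨((D / g : ℕ) : ℤ) * w, ?_⟩⟩
    rw [Int.cast_mul, Int.cast_natCast, hcastd, hcastl]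
    field_simp

lemma core_inter {n : ℕ} (d : Fin n → ℕ) (hd : ∀ i, 0 < d i) (ℓ : ℕ) (hℓ : 0 < ℓ) :
    imageLat (1 : Matrix (Fin n) (Fin n) ℚ)
        ∩ imageLat (Matrix.diagonal (fun i => (ℓ : ℚ) / (d i : ℚ)))
      = imageLat (Matrix.diagonal (fun i => ((ℓ / Nat.gcd ℓ (d i) : ℕ) : ℚ))) := by
  ext x
  simp only [Set.mem_inter_iff, mem_imageLat_one, mem_imageLat_diagonal]
  constructor
  · rintro ⟨h1, h2⟩ i
    exact (key_scalar ℓ (d i) hℓ (hd i) (x i)).mp ⟨h1 i, h2 i⟩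
  · intro h
    refine ⟨fun i => ((key_scalar ℓ (d i) hℓ (hd i) (x i)).mpr (h i)).1,
      fun i => ((key_scalar ℓ (d i) hℓ (hd i) (x i)).mpr (h i)).2⟩

/-- for `A_R` a symmetric invertible integer matrix,
`A_Λ = P S Pᵀ` with `P` unimodular and `S = diag(d₁,…,dₙ)`, `dᵢ > 0`, one has
`A_R·ℤⁿ ∩ ℓ·(A_Λ⁻¹A_R)ᵀ·ℤⁿ = A_R·(Pᵀ)⁻¹·D_ℓ·P⁻¹·ℤⁿ` with
`D_ℓ = diag(ℓ/gcd(ℓ,dᵢ))`, inverses taken over `ℚ`. -/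
theorem stmt9 {n : ℕ} (hn : 1 ≤ n)
    (AR : Matrix (Fin n) (Fin n) ℤ) (hARsymm : AR.transpose = AR)
    (hARinv : (AR.map ((↑) : ℤ → ℚ)).det ≠ 0)
    (P : Matrix (Fin n) (Fin n) ℤ) (hP : P.det = 1 ∨ P.det = -1)
    (d : Fin n → ℕ) (hd : ∀ i, 0 < d i)
    (ℓ : ℕ) (hℓ : 1 ≤ ℓ) :
    imageLat (AR.map ((↑) : ℤ → ℚ))
        ∩ imageLat ((ℓ : ℚ) •
            ((((P.map ((↑) : ℤ → ℚ)) * Matrix.diagonal (fun i => (d i : ℚ)) *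
                (P.map ((↑) : ℤ → ℚ)).transpose)⁻¹ *
              AR.map ((↑) : ℤ → ℚ)).transpose))
      = imageLat (AR.map ((↑) : ℤ → ℚ) * ((P.map ((↑) : ℤ → ℚ)).transpose)⁻¹ *
          Matrix.diagonal (fun i => ((ℓ / Nat.gcd ℓ (d i) : ℕ) : ℚ)) *
          (P.map ((↑) : ℤ → ℚ))⁻¹) := by
  have hℓ0 : 0 < ℓ := hℓ
  set Q : Matrix (Fin n) (Fin n) ℚ := P.map ((↑) : ℤ → ℚ) with hQdef
  set ARQ : Matrix (Fin n) (Fin n) ℚ := AR.map ((↑) : ℤ → ℚ) with hARQdef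
  set S : Matrix (Fin n) (Fin n) ℚ := Matrix.diagonal (fun i => (d i : ℚ)) with hSdef
  set Dq : Matrix (Fin n) (Fin n) ℚ :=
    Matrix.diagonal (fun i => (ℓ : ℚ) / (d i : ℚ)) with hDqdef
  set E : Matrix (Fin n) (Fin n) ℚ :=
    Matrix.diagonal (fun i => ((ℓ / Nat.gcd ℓ (d i) : ℕ) : ℚ)) with hEdef
  -- unimodular inverse of P over ℤ
  set P' : Matrix (Fin n) (Fin n) ℤ := P.det • P.adjugate with hP'def
  have hdet2 : P.det * P.det = 1 := by rcases hP with h | h <;> rw [h] <;> norm_num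
  have hPP' : P * P' = 1 := by
    rw [hP'def, Matrix.mul_smul, Matrix.mul_adjugate, smul_smul, hdet2, one_smul]
  have hP'P : P' * P = 1 := by
    rw [hP'def, Matrix.smul_mul, Matrix.adjugate_mul, smul_smul, hdet2, one_smul]
  have hmapone : (1 : Matrix (Fin n) (Fin n) ℤ).map ((↑) : ℤ → ℚ) = 1 :=
    Matrix.map_one _ Int.cast_zero Int.cast_one
  have hmapmul : ∀ A B : Matrix (Fin n) (Fin n) ℤ,
      (A * B).map ((↑) : ℤ → ℚ) = A.map ((↑) : ℤ → ℚ) * B.map ((↑) : ℤ → ℚ) :=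
    fun A B => Matrix.map_mul (f := Int.castRingHom ℚ)
  have hQP' : Q * P'.map ((↑) : ℤ → ℚ) = 1 := by
    rw [hQdef, ← hmapmul, hPP', hmapone]
  have hQinv : Q⁻¹ = P'.map ((↑) : ℤ → ℚ) := Matrix.inv_eq_right_inv hQP'
  have hQT : Qᵀ = (Pᵀ).map ((↑) : ℤ → ℚ) := Matrix.transpose_map.symm
  have hQTP'T : Qᵀ * (P'ᵀ).map ((↑) : ℤ → ℚ) = 1 := by
    rw [hQT, ← hmapmul, ← Matrix.transpose_mul, hP'P, Matrix.transpose_one, hmapone]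
  have hQTinv : (Qᵀ)⁻¹ = (P'ᵀ).map ((↑) : ℤ → ℚ) := Matrix.inv_eq_right_inv hQTP'T
  have hPTPT' : Pᵀ * P'ᵀ = 1 := by rw [← Matrix.transpose_mul, hP'P, Matrix.transpose_one]
  -- determinants
  have hdetQ : Q.det = (P.det : ℚ) := by
    have := RingHom.map_det (Int.castRingHom ℚ) P
    simpa [hQdef] using this.symm
  have hdetQ0 : Q.det ≠ 0 := by
    rw [hdetQ]; rcases hP with h | h <;> rw [h] <;> norm_num
  have hdetQT0 : (Qᵀ).det ≠ 0 := by rwa [Matrix.det_transpose]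
  -- N and its injectivity
  set N : Matrix (Fin n) (Fin n) ℚ := ARQ * (Qᵀ)⁻¹ with hNdef
  have hdetQTinv0 : ((Qᵀ)⁻¹).det ≠ 0 := by
    rw [Matrix.det_nonsing_inv, Ring.inverse_eq_inv]
    exact inv_ne_zero hdetQT0
  have hdetN0 : N.det ≠ 0 := by
    rw [hNdef, Matrix.det_mul]
    exact mul_ne_zero hARinv hdetQTinv0
  have hinj : Function.Injective (fun x => N.mulVec x) :=
    Matrix.mulVec_injective_iff_isUnit.mpr
      ((Matrix.isUnit_iff_isUnit_det N).mpr (isUnit_iff_ne_zero.mpr hdetN0))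
  -- symmetry facts
  have hARQsymm : ARQᵀ = ARQ := by
    rw [hARQdef, ← Matrix.transpose_map, hARsymm]
  have hST : Sᵀ = S := by rw [hSdef, Matrix.diagonal_transpose]
  have hAsymm : (Q * S * Qᵀ)ᵀ = Q * S * Qᵀ := by
    rw [Matrix.transpose_mul, Matrix.transpose_mul, Matrix.transpose_transpose,
      hST, Matrix.mul_assoc]
  -- diagonal inverse facts
  have hdQ : ∀ i, ((d i : ℚ)) ≠ 0 := fun i => by exact_mod_cast (hd i).ne'
  have hSinv : S⁻¹ = Matrix.diagonal (fun i => ((d i : ℚ))⁻¹) :=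
    Matrix.inv_eq_right_inv (by
      rw [hSdef, Matrix.diagonal_mul_diagonal,
        show (fun i => (d i : ℚ) * (d i : ℚ)⁻¹) = fun _ => 1 from
          funext fun i => mul_inv_cancel₀ (hdQ i), Matrix.diagonal_one])
  have hDqS : (ℓ : ℚ) • S⁻¹ = Dq := by
    rw [hSinv, hDqdef, ← Matrix.diagonal_smul]
    exact congrArg Matrix.diagonal (funext fun i => by simp [div_eq_mul_inv])
  -- the second lattice matrix
  have hM2 : (ℓ : ℚ) • ((Q * S * Qᵀ)⁻¹ * ARQ)ᵀ = N * Dq * Q⁻¹ := by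
    rw [Matrix.transpose_mul, Matrix.transpose_nonsing_inv, hAsymm, hARQsymm,
      Matrix.mul_inv_rev, Matrix.mul_inv_rev, hNdef, ← hDqS]
    simp [Matrix.mul_smul, Matrix.smul_mul, Matrix.mul_assoc]
  have hNQT : N * Qᵀ = ARQ := by
    rw [hNdef, Matrix.mul_assoc,
      Matrix.nonsing_inv_mul _ (isUnit_iff_ne_zero.mpr hdetQT0), Matrix.mul_one]
  have e1 : imageLat ARQ = (fun x => N.mulVec x) '' imageLat 1 := by
    rw [← hNQT, hQT, imageLat_mul_unimod N Pᵀ P'ᵀ hPTPT']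
    conv_lhs => rw [← Matrix.mul_one N]
    rw [imageLat_mul_left]
  have e2 : imageLat ((ℓ : ℚ) • ((Q * S * Qᵀ)⁻¹ * ARQ)ᵀ)
      = (fun x => N.mulVec x) '' imageLat Dq := by
    rw [hM2, hQinv, imageLat_mul_unimod (N * Dq) P' P hP'P, imageLat_mul_left]
  have e3 : imageLat (ARQ * (Qᵀ)⁻¹ * E * Q⁻¹)
      = (fun x => N.mulVec x) '' imageLat E := by
    rw [hQinv, show ARQ * (Qᵀ)⁻¹ * E = N * E from by rw [hNdef],
      imageLat_mul_unimod (N * E) P' P hP'P, imageLat_mul_left]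
  rw [e1, e2, e3, ← Set.image_inter hinj, core_inter d hd ℓ hℓ0]
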